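/- Let c > 0. There exist constants C₁, C₂ > 0 such that for all t ≥ 1: C₁ t^{1/2} ≤ (∫₀^1 r^{−2}·sin²(rt)·e^{−2c r² t} dr)^{1/2} ≤ C₂ t^{1/2}. -/

import Mathlib

set_option maxHeartbeats 1000000

open MeasureTheory Real Set

theorem profile_two_sided_estimate_1d (c : ℝ) (hc : 0 < c) :
    ∃ C₁ C₂ : ℝ, 0 < C₁ ∧ 0 < C₂ ∧ ∀ t : ℝ, 1 ≤ t →
      C₁ * t ^ ((1 : ℝ) / 2)
        ≤ Real.sqrt (∫ r in Set.Ioo (0 : ℝ) 1,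
            r ^ (-2 : ℝ) * Real.sin (r * t) ^ 2 * Real.exp (-2 * c * r ^ 2 * t)) ∧
      Real.sqrt (∫ r in Set.Ioo (0 : ℝ) 1,
            r ^ (-2 : ℝ) * Real.sin (r * t) ^ 2 * Real.exp (-2 * c * r ^ 2 * t))
        ≤ C₂ * t ^ ((1 : ℝ) / 2) := by
  have hsin : 0 < Real.sin (1/2) :=
    Real.sin_pos_of_pos_of_lt_pi (by norm_num) (by linarith [Real.pi_gt_three])
  set K₁ : ℝ := Real.sin (1/2) ^ 2 * Real.exp (-2*c) / 2 with hK₁def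
  have hK₁ : 0 < K₁ := div_pos (mul_pos (pow_pos hsin 2) (Real.exp_pos _)) two_pos
  refine ⟨Real.sqrt K₁, Real.sqrt 2, Real.sqrt_pos.2 hK₁, Real.sqrt_pos.2 two_pos, ?_⟩
  intro t ht
  have ht0 : (0:ℝ) < t := lt_of_lt_of_le one_pos ht
  have hrw : ∀ r : ℝ, r ^ (-2:ℝ) = (r^2)⁻¹ := by
    intro r
    rw [show (-2:ℝ) = ((-2:ℤ):ℝ) by norm_num, Real.rpow_intCast]
    simp only [zpow_neg]
    norm_cast
  set f : ℝ → ℝ := fun r =>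
    r ^ (-2 : ℝ) * Real.sin (r * t) ^ 2 * Real.exp (-2 * c * r ^ 2 * t) with hfdef
  have hfg : f = fun r => (r^2)⁻¹ * Real.sin (r * t) ^ 2 * Real.exp (-2 * c * r ^ 2 * t) := by
    funext r; simp only [hfdef, hrw]
  have hfnn : ∀ r : ℝ, 0 ≤ f r := by
    intro r; rw [hfg]; positivity
  have hmeas : AEStronglyMeasurable f volume := by
    rw [hfg]; apply Measurable.aestronglyMeasurable; fun_prop
  -- pointwise upper bound by t^2 for positive r
  have hub : ∀ r : ℝ, 0 < r → f r ≤ t^2 := by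
    intro r hr
    rw [hfg]
    have h1 : Real.sin (r*t) ^ 2 ≤ (r*t)^2 := Real.sin_sq_le_sq
    have h2 : Real.exp (-2 * c * r ^ 2 * t) ≤ 1 := by
      rw [Real.exp_le_one_iff]; nlinarith
    calc (r^2)⁻¹ * Real.sin (r * t) ^ 2 * Real.exp (-2 * c * r ^ 2 * t)
        ≤ (r^2)⁻¹ * (r*t)^2 * 1 := by
          apply mul_le_mul (by gcongr) h2 (Real.exp_pos _).le (by positivity)
      _ = t^2 := by field_simp
  -- integrability on Ioo 0 1
  have hint : IntegrableOn f (Ioo (0:ℝ) 1) volume := by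
    apply Measure.integrableOn_of_bounded (M := t^2) (by simp) hmeas
    rw [ae_restrict_iff' measurableSet_Ioo]
    filter_upwards with r hr
    rw [Real.norm_eq_abs, abs_of_nonneg (hfnn r)]
    exact hub r hr.1
  -- ===== Upper bound : ∫ ≤ 2 t =====
  have hinv_le_one : 1/t ≤ 1 := by rw [div_le_one ht0]; exact ht
  have hinv_pos : (0:ℝ) < 1/t := by positivity
  have hsplit : Ioo (0:ℝ) 1 = Ioo 0 (1/t) ∪ Ico (1/t) 1 :=
    (Set.Ioo_union_Ico_eq_Ioo hinv_pos hinv_le_one).symm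
  have hint1 : IntegrableOn f (Ioo (0:ℝ) (1/t)) volume :=
    hint.mono_set (by rw [hsplit]; exact subset_union_left)
  have hint2 : IntegrableOn f (Ico (1/t) (1:ℝ)) volume :=
    hint.mono_set (by rw [hsplit]; exact subset_union_right)
  have hI1 : ∫ r in Ioo (0:ℝ) (1/t), f r ≤ t := by
    calc ∫ r in Ioo (0:ℝ) (1/t), f r ≤ ∫ _ in Ioo (0:ℝ) (1/t), t^2 := by
          apply setIntegral_mono_on hint1
            (integrableOn_const (by simp) (by simp)) measurableSet_Ioo
          intro x hx; exact hub x hx.1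
      _ = t^2 * (1/t) := by
          rw [setIntegral_const, measureReal_def, Real.volume_Ioo, smul_eq_mul,
            ENNReal.toReal_ofReal (by rw [sub_zero]; positivity)]
          ring
      _ = t := by field_simp
  have hrpow_int : IntegrableOn (fun r : ℝ => r ^ (-2:ℝ)) (Ico (1/t) 1) volume := by
    have hmble2 : AEStronglyMeasurable (fun r : ℝ => r ^ (-2:ℝ)) volume := by
      apply Measurable.aestronglyMeasurable
      have : (fun r : ℝ => r ^ (-2:ℝ)) = fun r : ℝ => (r^2)⁻¹ := funext hrw
      rw [this]; fun_prop
    apply Measure.integrableOn_of_bounded (M := t^2) (by simp) hmble2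
    · rw [ae_restrict_iff' measurableSet_Ico]
      filter_upwards with r hr
      have hr0 : 0 < r := lt_of_lt_of_le hinv_pos hr.1
      rw [Real.norm_eq_abs, hrw, abs_of_nonneg (by positivity)]
      have h1 : 1 ≤ r * t := by
        have := hr.1
        rw [div_le_iff₀ ht0] at this
        linarith
      calc (r^2)⁻¹ ≤ (r^2)⁻¹ * (r*t)^2 :=
            le_mul_of_one_le_right (by positivity) (by nlinarith)
        _ = t^2 := by field_simp
  have hI2 : ∫ r in Ico (1/t) (1:ℝ), f r ≤ t - 1 := by
    calc ∫ r in Ico (1/t) (1:ℝ), f r ≤ ∫ r in Ico (1/t) (1:ℝ), r ^ (-2:ℝ) := by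
          apply setIntegral_mono_on hint2 hrpow_int measurableSet_Ico
          intro x hx
          have hx0 : 0 < x := lt_of_lt_of_le hinv_pos hx.1
          rw [hfg, hrw]
          have h1 : Real.sin (x*t) ^ 2 ≤ 1 := by
            have := Real.neg_one_le_sin (x*t)
            have := Real.sin_le_one (x*t)
            nlinarith
          have h2 : Real.exp (-2 * c * x ^ 2 * t) ≤ 1 := by
            rw [Real.exp_le_one_iff]
            have := mul_nonneg (mul_nonneg hc.le (sq_nonneg x)) ht0.le
            nlinarith
          calc (x^2)⁻¹ * Real.sin (x * t) ^ 2 * Real.exp (-2 * c * x ^ 2 * t)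
              ≤ (x^2)⁻¹ * 1 * 1 :=
                mul_le_mul (by gcongr) h2 (Real.exp_pos _).le (by positivity)
            _ = (x^2)⁻¹ := by ring
      _ = ∫ r in (1/t)..1, r ^ (-2:ℝ) := by
          rw [MeasureTheory.integral_Ico_eq_integral_Ioo,
            ← MeasureTheory.integral_Ioc_eq_integral_Ioo,
            intervalIntegral.integral_of_le hinv_le_one]
      _ = t - 1 := by
          rw [integral_rpow (Or.inr ⟨by norm_num, Set.notMem_uIcc_of_lt hinv_pos one_pos⟩)]
          norm_num
          rw [Real.rpow_neg_one]
          field_simp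
          ring
  have hupper : ∫ r in Ioo (0:ℝ) 1, f r ≤ 2 * t := by
    rw [hsplit, setIntegral_union ((Set.Ico_disjoint_Ico_same.mono_left Set.Ioo_subset_Ico_self)) measurableSet_Ico hint1 hint2]
    linarith
  -- ===== Lower bound : K₁ t ≤ ∫ =====
  have hsub : Ioo (1/(2*t)) (1/t) ⊆ Ioo (0:ℝ) 1 := by
    intro x hx
    exact ⟨lt_trans (by positivity) hx.1, lt_of_lt_of_le hx.2 hinv_le_one⟩
  have hlow_pt : ∀ x ∈ Ioo (1/(2*t)) (1/t),
      t^2 * Real.sin (1/2) ^ 2 * Real.exp (-2*c) ≤ f x := by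
    intro x hx
    obtain ⟨hx1, hx2⟩ := hx
    have hx0 : 0 < x := lt_trans (by positivity) hx1
    have hxt1 : 1/2 < x * t := by
      rw [div_lt_iff₀ (by positivity)] at hx1
      nlinarith
    have hxt2 : x * t < 1 := by
      rw [lt_div_iff₀ ht0] at hx2
      exact hx2
    rw [hfg]
    have h1 : t^2 ≤ (x^2)⁻¹ := by
      calc t^2 = t^2 * (x^2 * (x^2)⁻¹) := by field_simp
        _ ≤ 1 * (x^2)⁻¹ := by
            rw [← mul_assoc]
            apply mul_le_mul_of_nonneg_right _ (by positivity)
            nlinarith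
        _ = (x^2)⁻¹ := one_mul _
    have h2 : Real.sin (1/2) ^ 2 ≤ Real.sin (x*t) ^ 2 := by
      have hle : Real.sin (1/2) ≤ Real.sin (x*t) := by
        apply Real.sin_le_sin_of_le_of_le_pi_div_two
        · linarith [Real.pi_gt_three]
        · linarith [Real.pi_gt_three]
        · linarith
      exact pow_le_pow_left₀ hsin.le hle 2
    have h3 : Real.exp (-2*c) ≤ Real.exp (-2 * c * x ^ 2 * t) := by
      apply Real.exp_le_exp.2
      have hxle1 : x ≤ 1 := le_of_lt (lt_of_lt_of_le hx2 hinv_le_one)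
      have hx2t : x^2*t ≤ 1 := by nlinarith [mul_nonneg hx0.le ht0.le]
      nlinarith [mul_le_mul_of_nonneg_left hx2t hc.le]
    exact mul_le_mul (mul_le_mul h1 h2 (by positivity) (by positivity)) h3
      (Real.exp_pos _).le (by positivity)
  have hlower : K₁ * t ≤ ∫ r in Ioo (0:ℝ) 1, f r := by
    have hstep : (t^2 * Real.sin (1/2) ^ 2 * Real.exp (-2*c)) *
        (volume (Ioo (1/(2*t)) (1/t))).toReal ≤ ∫ r in Ioo (1/(2*t)) (1/t), f r :=
      setIntegral_ge_of_const_le_real measurableSet_Ioo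
        (by rw [Real.volume_Ioo]; exact ENNReal.ofReal_ne_top) hlow_pt
        (hint.mono_set hsub)
    have key : 1/t - 1/(2*t) = 1/(2*t) := by
      field_simp
      ring
    have hvol : (volume (Ioo (1/(2*t)) (1/t))).toReal = 1/(2*t) := by
      rw [Real.volume_Ioo, key, ENNReal.toReal_ofReal (by positivity)]
    rw [hvol] at hstep
    have heq : (t^2 * Real.sin (1/2) ^ 2 * Real.exp (-2*c)) * (1/(2*t)) = K₁ * t := by
      rw [hK₁def]; field_simp
    rw [heq] at hstep
    calc K₁ * t ≤ ∫ r in Ioo (1/(2*t)) (1/t), f r := hstep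
      _ ≤ ∫ r in Ioo (0:ℝ) 1, f r := by
          apply setIntegral_mono_set hint
          · filter_upwards with r using hfnn r
          · exact HasSubset.Subset.eventuallyLE hsub
  -- ===== Conclusion =====
  have h1 : Real.sqrt K₁ * t ^ ((1:ℝ)/2) = Real.sqrt (K₁ * t) := by
    rw [Real.sqrt_mul hK₁.le t, Real.sqrt_eq_rpow t]
  have h2 : Real.sqrt (2*t) = Real.sqrt 2 * t ^ ((1:ℝ)/2) := by
    rw [Real.sqrt_mul (by norm_num : (0:ℝ) ≤ 2) t, Real.sqrt_eq_rpow t]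
  constructor
  · rw [h1]
    exact Real.sqrt_le_sqrt hlower
  · rw [← h2]
    exact Real.sqrt_le_sqrt hupper
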